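/- Let & be a continuous t-norm on [0,1], and let a < b both be idempotent elements for &. Then the restriction of & to [a,b] is a continuous t-norm on [a,b], i.e., & maps [a,b]×[a,b] into [a,b], is continuous, commutative, associative, monotone, and has b as unit on [a,b]. -/
import Mathlib


noncomputable def tres (f : ℝ → ℝ → ℝ) (x y : ℝ) : ℝ :=
  sSup {z | z ∈ Set.Icc (0:ℝ) 1 ∧ f x z ≤ y}

def IsContTNorm (f : ℝ → ℝ → ℝ) : Prop :=
  (∀ a ∈ Set.Icc (0:ℝ) 1, ∀ b ∈ Set.Icc (0:ℝ) 1, f a b ∈ Set.Icc (0:ℝ) 1) ∧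
  ContinuousOn (fun p : ℝ × ℝ => f p.1 p.2) (Set.Icc 0 1 ×ˢ Set.Icc 0 1) ∧
  (∀ a ∈ Set.Icc (0:ℝ) 1, ∀ b ∈ Set.Icc (0:ℝ) 1, f a b = f b a) ∧
  (∀ a ∈ Set.Icc (0:ℝ) 1, ∀ b ∈ Set.Icc (0:ℝ) 1, ∀ c ∈ Set.Icc (0:ℝ) 1,
    f (f a b) c = f a (f b c)) ∧
  (∀ a ∈ Set.Icc (0:ℝ) 1, ∀ b ∈ Set.Icc (0:ℝ) 1, ∀ c ∈ Set.Icc (0:ℝ) 1,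
    a ≤ b → f a c ≤ f b c) ∧
  (∀ a ∈ Set.Icc (0:ℝ) 1, f a 1 = a)

/-- if `a < b` are idempotent, the restriction of the continuous t-norm to
`[a,b]` is a continuous t-norm on `[a,b]` with unit `b`. -/
theorem stmt7 (f : ℝ → ℝ → ℝ) (ht : IsContTNorm f)
    (a : ℝ) (ha : a ∈ Set.Icc (0:ℝ) 1) (b : ℝ) (hb : b ∈ Set.Icc (0:ℝ) 1)
    (hab : a < b) (hia : f a a = a) (hib : f b b = b) :
    (∀ x ∈ Set.Icc a b, ∀ y ∈ Set.Icc a b, f x y ∈ Set.Icc a b) ∧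
    ContinuousOn (fun p : ℝ × ℝ => f p.1 p.2) (Set.Icc a b ×ˢ Set.Icc a b) ∧
    (∀ x ∈ Set.Icc a b, ∀ y ∈ Set.Icc a b, f x y = f y x) ∧
    (∀ x ∈ Set.Icc a b, ∀ y ∈ Set.Icc a b, ∀ z ∈ Set.Icc a b, f (f x y) z = f x (f y z)) ∧
    (∀ x ∈ Set.Icc a b, ∀ y ∈ Set.Icc a b, ∀ z ∈ Set.Icc a b, x ≤ y → f x z ≤ f y z) ∧
    (∀ x ∈ Set.Icc a b, f x b = x) := by
  obtain ⟨hrange, hcont, hcomm, hassoc, hmono, hunit⟩ := ht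
  have sub : Set.Icc a b ⊆ Set.Icc (0:ℝ) 1 := Set.Icc_subset_Icc ha.1 hb.2
  have h1 : (1:ℝ) ∈ Set.Icc (0:ℝ) 1 := by norm_num
  have h0 : (0:ℝ) ∈ Set.Icc (0:ℝ) 1 := by norm_num
  have hmono2 : ∀ x ∈ Set.Icc (0:ℝ) 1, ∀ y ∈ Set.Icc (0:ℝ) 1, ∀ z ∈ Set.Icc (0:ℝ) 1,
      y ≤ z → f x y ≤ f x z := by
    intro x hx y hy z hz hyz
    rw [hcomm x hx y hy, hcomm x hx z hz]
    exact hmono y hy z hz x hx hyz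
  have hrng : ∀ x ∈ Set.Icc a b, ∀ y ∈ Set.Icc a b, f x y ∈ Set.Icc a b := by
    intro x hx y hy
    have hx' := sub hx; have hy' := sub hy
    constructor
    · calc a = f a a := hia.symm
        _ ≤ f x a := hmono a ha x hx' a ha hx.1
        _ ≤ f x y := hmono2 x hx' a ha y hy' hy.1
    · calc f x y ≤ f 1 y := hmono x hx' 1 h1 y hy' hx'.2
        _ = f y 1 := hcomm 1 h1 y hy'
        _ = y := hunit y hy'
        _ ≤ b := hy.2
  refine ⟨hrng, hcont.mono (Set.prod_mono sub sub), ?_, ?_, ?_, ?_⟩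
  · intro x hx y hy; exact hcomm x (sub hx) y (sub hy)
  · intro x hx y hy z hz; exact hassoc x (sub hx) y (sub hy) z (sub hz)
  · intro x hx y hy z hz hxy; exact hmono x (sub hx) y (sub hy) z (sub hz) hxy
  · intro x hx
    have hx' := sub hx
    have hcb : ContinuousOn (fun t : ℝ => f t b) (Set.Icc (0:ℝ) 1) := by
      have hmap : ∀ t ∈ Set.Icc (0:ℝ) 1,
          ((t, b) : ℝ × ℝ) ∈ Set.Icc (0:ℝ) 1 ×ˢ Set.Icc (0:ℝ) 1 := fun t htt => ⟨htt, hb⟩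
      exact hcont.comp ((continuous_id.prodMk continuous_const).continuousOn) hmap
    have h0b : f 0 b ≤ x := by
      calc f 0 b = f b 0 := hcomm 0 h0 b hb
        _ ≤ f 1 0 := hmono b hb 1 h1 0 h0 hb.2
        _ = f 0 1 := hcomm 1 h1 0 h0
        _ = 0 := hunit 0 h0
        _ ≤ x := hx'.1
    have hivt := intermediate_value_Icc hb.1 (hcb.mono (Set.Icc_subset_Icc le_rfl hb.2))
    have hxmem : x ∈ Set.Icc (f 0 b) (f b b) := ⟨h0b, by rw [hib]; exact hx.2⟩
    obtain ⟨c, hc, hcx0⟩ := hivt hxmem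
    have hcx : f c b = x := hcx0
    have hc' : c ∈ Set.Icc (0:ℝ) 1 := Set.Icc_subset_Icc le_rfl hb.2 hc
    calc f x b = f (f c b) b := by rw [hcx]
      _ = f c (f b b) := hassoc c hc' b hb b hb
      _ = f c b := by rw [hib]
      _ = x := hcx
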